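/- Let h : ℂ → ℂ be entire and nowhere vanishing, and suppose h has finite order of growth: there exist a constant C > 0 and a natural number d such that |h(z)| ≤ Real.exp (C * (1 + |z|)^d) for all z ∈ ℂ.oThen there exists a polynomial P ∈ ℂ[X] with natural degree at most d such that h(z) = Complex.exp (P.eval z) for all z ∈ ℂ. -/

import Mathlib

open Complex Metric Set Filter intervalIntegral
open scoped NNReal ENNReal Topology


lemma entire_deriv {f : ℂ → ℂ} (hf : Differentiable ℂ f) : Differentiable ℂ (deriv f) := by
  have := (analyticOnNhd_univ_iff_differentiable.mpr hf).deriv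
  exact fun x => ((this x (mem_univ x)).differentiableAt)

lemma entire_primitive {f : ℂ → ℂ} (hf : Differentiable ℂ f) :
    ∃ g : ℂ → ℂ, ∀ z : ℂ, HasDerivAt g (f z) z := by
  have hderiv : Differentiable ℂ (deriv f) := entire_deriv hf
  have hfc : Continuous f := hf.continuous
  have hdc : Continuous (deriv f) := hderiv.continuous
  refine ⟨fun z => ∫ t in (0:ℝ)..1, z * f ((t : ℂ) * z), fun x₀ => ?_⟩
  set F : ℂ → ℝ → ℂ := fun x t => x * f ((t : ℂ) * x) with hF
  set F' : ℂ → ℝ → ℂ := fun x t => f ((t : ℂ) * x) + x * (deriv f ((t : ℂ) * x) * (t : ℂ)) with hF'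
  have hFt : ∀ x : ℂ, Continuous (F x) := by
    intro x
    exact continuous_const.mul (hfc.comp ((Complex.continuous_ofReal).mul continuous_const))
  have hF't : ∀ x : ℂ, Continuous (F' x) := by
    intro x
    refine Continuous.add (hfc.comp ((Complex.continuous_ofReal).mul continuous_const)) ?_
    exact continuous_const.mul
      (((hdc.comp ((Complex.continuous_ofReal).mul continuous_const))).mul
        Complex.continuous_ofReal)
  -- bound on the compact set [0,1] × closedBall x₀ 1
  obtain ⟨M, hM⟩ : ∃ M : ℝ, ∀ p ∈ (Set.Icc (0:ℝ) 1 ×ˢ closedBall x₀ 1), ‖F' p.2 p.1‖ ≤ M := by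
    have hcomp : IsCompact (Set.Icc (0:ℝ) 1 ×ˢ closedBall x₀ 1) :=
      isCompact_Icc.prod (isCompact_closedBall _ _)
    have hc1 : Continuous fun p : ℝ × ℂ => ((p.1 : ℂ) * p.2) :=
      (Complex.continuous_ofReal.comp continuous_fst).mul continuous_snd
    have hcont : Continuous fun p : ℝ × ℂ => F' p.2 p.1 := by
      refine Continuous.add (hfc.comp hc1) ?_
      exact continuous_snd.mul ((hdc.comp hc1).mul
        (Complex.continuous_ofReal.comp continuous_fst))
    exact hcomp.exists_bound_of_continuousOn hcont.continuousOn
  have h_bound : ∀ᵐ t ∂(MeasureTheory.volume), t ∈ Set.uIoc (0:ℝ) 1 →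
      ∀ x ∈ ball x₀ 1, ‖F' x t‖ ≤ M := by
    refine Filter.Eventually.of_forall fun t ht x hx => ?_
    refine hM (t, x) ⟨?_, ball_subset_closedBall hx⟩
    rw [Set.uIoc_of_le zero_le_one] at ht
    exact ⟨ht.1.le, ht.2⟩
  have h_diff : ∀ᵐ t ∂(MeasureTheory.volume), t ∈ Set.uIoc (0:ℝ) 1 →
      ∀ x ∈ ball x₀ 1, HasDerivAt (fun x => F x t) (F' x t) x := by
    refine Filter.Eventually.of_forall fun t _ x _ => ?_
    have h2 : HasDerivAt (fun y : ℂ => f ((t:ℂ) * y)) (deriv f ((t:ℂ)*x) * (t:ℂ)) x := by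
      have hinner : HasDerivAt (fun y : ℂ => (t:ℂ) * y) (t:ℂ) x := by
        simpa using (hasDerivAt_id x).const_mul (t:ℂ)
      exact ((hf ((t:ℂ)*x)).hasDerivAt).comp x hinner
    have h3 : HasDerivAt (fun x => F x t) _ x := (hasDerivAt_id' x).mul h2
    simpa [hF', one_mul] using h3
  have key := intervalIntegral.hasDerivAt_integral_of_dominated_loc_of_deriv_le
    (F := F) (F' := F') (x₀ := x₀) (a := (0:ℝ)) (b := 1) (μ := MeasureTheory.volume)
    (bound := fun _ => M) (ball_mem_nhds x₀ one_pos)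
    (Filter.Eventually.of_forall fun x => (hFt x).aestronglyMeasurable.restrict)
    ((hFt x₀).intervalIntegrable 0 1)
    (hF't x₀).aestronglyMeasurable.restrict
    h_bound intervalIntegrable_const h_diff
  obtain ⟨hint, hD⟩ := key
  -- compute the integral of F' x₀
  have hFTC : (∫ t in (0:ℝ)..1, F' x₀ t) = f x₀ := by
    have hψ : ∀ t ∈ Set.uIcc (0:ℝ) 1,
        HasDerivAt (fun s : ℝ => (s:ℂ) * f ((s:ℂ) * x₀)) (F' x₀ t) t := by
      intro t _
      have h2 : HasDerivAt (fun w : ℂ => f (w * x₀)) (deriv f ((t:ℂ)*x₀) * x₀) (t:ℂ) := by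
        have hinner : HasDerivAt (fun w : ℂ => w * x₀) x₀ (t:ℂ) := by
          simpa using (hasDerivAt_id (t:ℂ)).mul_const x₀
        exact ((hf ((t:ℂ)*x₀)).hasDerivAt).comp (t:ℂ) hinner
      have hC : HasDerivAt (fun w : ℂ => w * f (w * x₀))
          (1 * f ((t:ℂ)*x₀) + (t:ℂ) * (deriv f ((t:ℂ)*x₀) * x₀)) ((t:ℂ)) :=
        (hasDerivAt_id (t:ℂ)).mul h2
      have := hC.comp_ofReal
      convert this using 1
      simp only [hF']
      ring
    have := intervalIntegral.integral_eq_sub_of_hasDerivAt hψ hint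
    simpa using this
  rw [hFTC] at hD
  exact hD

lemma entire_exp_rep {h : ℂ → ℂ} (hdiff : Differentiable ℂ h) (hnz : ∀ z : ℂ, h z ≠ 0) :
    ∃ γ : ℂ → ℂ, Differentiable ℂ γ ∧ ∀ z, h z = Complex.exp (γ z) := by
  have hd : Differentiable ℂ (deriv h) := entire_deriv hdiff
  have hfdiff : Differentiable ℂ (fun z => deriv h z / h z) := hd.div hdiff hnz
  obtain ⟨g, hg⟩ := entire_primitive hfdiff
  set γ : ℂ → ℂ := fun z => g z - g 0 + Complex.log (h 0) with hγ
  have hγdiff : Differentiable ℂ γ := by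
    have hgdiff : Differentiable ℂ g := fun z => (hg z).differentiableAt
    exact (hgdiff.sub_const _).add_const _
  have hγ' : ∀ z, HasDerivAt γ (deriv h z / h z) z := fun z =>
    ((hg z).sub_const (g 0)).add_const _
  set φ : ℂ → ℂ := fun z => h z * Complex.exp (-γ z) with hφ
  have hφ' : ∀ z, HasDerivAt φ 0 z := by
    intro z
    have h1 : HasDerivAt (fun w => Complex.exp (-γ w))
        (Complex.exp (-γ z) * (-(deriv h z / h z))) z := ((hγ' z).neg).cexp
    have h2 : HasDerivAt φ _ z := (hdiff z).hasDerivAt.mul h1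
    convert h2 using 1
    field_simp [hnz z]
    ring
  have hφconst : ∀ z, φ z = φ 0 := by
    intro z
    exact is_const_of_deriv_eq_zero (fun w => (hφ' w).differentiableAt)
      (fun w => (hφ' w).deriv) z 0
  have hφ0 : φ 0 = 1 := by
    simp only [hφ, hγ]
    rw [sub_self, zero_add, Complex.exp_neg, Complex.exp_log (hnz 0)]
    exact div_self (hnz 0)
  refine ⟨γ, hγdiff, fun z => ?_⟩
  have h1 := (hφconst z).trans hφ0
  rw [hφ] at h1
  simp only [Complex.exp_neg] at h1
  field_simp [Complex.exp_ne_zero (γ z)] at h1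
  exact h1


lemma borel_caratheodory {ψ : ℂ → ℂ} (hψ : Differentiable ℂ ψ) (hψ0 : ψ 0 = 0) {R A : ℝ}
    (hR : 0 < R) (hA : 0 < A) (hre : ∀ w : ℂ, ‖w‖ < 2*R → (ψ w).re < A) :
    ∀ z : ℂ, ‖z‖ ≤ R → ‖ψ z‖ ≤ 2*A := by
  intro z hz
  set D : ℂ → ℂ := fun w => (2*A : ℝ) - ψ w with hD
  have habs_lt : ∀ w : ℂ, ‖w‖ < 2*R → ‖ψ w‖ < ‖D w‖ := by
    intro w hw
    have hsq : (‖ψ w‖)^2 < (‖D w‖)^2 := by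
      rw [Complex.sq_norm, Complex.sq_norm, Complex.normSq_apply, Complex.normSq_apply]
      simp only [hD, Complex.sub_re, Complex.sub_im, Complex.ofReal_re, Complex.ofReal_im]
      nlinarith [hre w hw]
    nlinarith [norm_nonneg (ψ w), norm_nonneg (D w)]
  have hDne : ∀ w : ℂ, ‖w‖ < 2*R → D w ≠ 0 := by
    intro w hw h0
    have := habs_lt w hw
    rw [h0] at this
    simp at this
    exact absurd this (norm_nonneg _).not_gt
  set φ : ℂ → ℂ := fun w => ψ w / D w with hφ
  have hφdiff : DifferentiableOn ℂ φ (ball 0 (2*R)) := by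
    apply DifferentiableOn.div hψ.differentiableOn
      ((differentiable_const _).sub hψ).differentiableOn
    intro w hw
    exact hDne w (by simpa using mem_ball_zero_iff.mp hw)
  have hφ0 : φ 0 = 0 := by simp [hφ, hψ0]
  have hmaps : MapsTo φ (ball 0 (2*R)) (ball (φ 0) 1) := by
    intro w hw
    rw [hφ0, mem_ball_zero_iff]
    have hw' : ‖w‖ < 2*R := by simpa using mem_ball_zero_iff.mp hw
    have h1 := habs_lt w hw'
    have h2 : (0:ℝ) < ‖D w‖ := lt_of_le_of_lt (norm_nonneg _) h1
    rw [hφ]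
    simp only [norm_div]
    exact (div_lt_one h2).mpr h1
  have hzball : z ∈ ball (0:ℂ) (2*R) := by
    rw [mem_ball_zero_iff]
    linarith
  have hSch := Complex.dist_le_div_mul_dist_of_mapsTo_ball hφdiff (hmaps.mono_right ball_subset_closedBall) hzball
  have hφz : ‖φ z‖ ≤ 1/2 := by
    rw [hφ0] at hSch
    have : dist (φ z) 0 ≤ 1 / (2*R) * dist z 0 := hSch
    rw [dist_zero_right, dist_zero_right] at this
    calc ‖φ z‖ ≤ 1/(2*R) * ‖z‖ := this
      _ ≤ 1/(2*R) * R := by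
          apply mul_le_mul_of_nonneg_left hz
          positivity
      _ = 1/2 := by field_simp
  have hzlt : ‖z‖ < 2*R := lt_of_le_of_lt hz (by linarith)
  have hψeq : ψ z = φ z * D z := (div_mul_cancel₀ _ (hDne z hzlt)).symm
  have hDle : ‖D z‖ ≤ 2*A + ‖ψ z‖ := by
    calc ‖D z‖ = ‖((2*A:ℝ):ℂ) - ψ z‖ := rfl
      _ ≤ ‖((2*A:ℝ):ℂ)‖ + ‖ψ z‖ := norm_sub_le _ _
      _ = 2*A + ‖ψ z‖ := by
          rw [Complex.norm_real, Real.norm_eq_abs, abs_of_pos (by positivity : (0:ℝ) < 2*A)]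
  have : ‖ψ z‖ ≤ 1/2 * (2*A + ‖ψ z‖) := by
    calc ‖ψ z‖ = ‖φ z‖ * ‖D z‖ := by
          rw [hψeq, norm_mul]
      _ ≤ 1/2 * (2*A + ‖ψ z‖) := by
          apply mul_le_mul hφz hDle (norm_nonneg _) (by norm_num)
  linarith


lemma entire_poly_growth {γ : ℂ → ℂ} (hγ : Differentiable ℂ γ) {B : ℝ} (d : ℕ)
    (hbound : ∀ z : ℂ, ‖γ z‖ ≤ B * (1 + ‖z‖)^d) :
    ∃ P : Polynomial ℂ, P.natDegree ≤ d ∧ ∀ z : ℂ, γ z = Polynomial.eval z P := by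
  have hB : 0 ≤ B := by
    have := (norm_nonneg (γ 0)).trans (hbound 0)
    simpa using this
  set p := cauchyPowerSeries γ 0 ((1:ℝ≥0):ℝ) with hp
  have hp1 : HasFPowerSeriesOnBall γ p 0 ⊤ := hγ.hasFPowerSeriesOnBall 0 one_pos
  have hcoeff : ∀ R : ℝ≥0, 0 < R → cauchyPowerSeries γ 0 R = p := by
    intro R hR
    exact (hγ.hasFPowerSeriesOnBall 0 hR).hasFPowerSeriesAt.eq_formalMultilinearSeries
      hp1.hasFPowerSeriesAt
  have hzero : ∀ n : ℕ, d < n → p n = 0 := by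
    intro n hn
    have key : ∀ R : ℝ, 1 ≤ R → ‖p n‖ ≤ B * 2^d / R := by
      intro R hR
      have hR0 : (0:ℝ) < R := lt_of_lt_of_le one_pos hR
      have hpn : p n = cauchyPowerSeries γ 0 R n :=
        congrFun (hcoeff ⟨R, hR0.le⟩ (by exact_mod_cast hR0)).symm n
      have hest := norm_cauchyPowerSeries_le γ 0 R n
      rw [← hpn] at hest
      have hint : (∫ θ : ℝ in (0)..2 * Real.pi, ‖γ (circleMap 0 R θ)‖)
          ≤ 2 * Real.pi * (B * (1+R)^d) := by
        have hmono : ∀ θ ∈ Set.Icc (0:ℝ) (2*Real.pi),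
            ‖γ (circleMap 0 R θ)‖ ≤ B * (1+R)^d := by
          intro θ _
          have h := hbound (circleMap 0 R θ)
          rw [norm_circleMap_zero, abs_of_pos hR0] at h
          exact h
        calc (∫ θ : ℝ in (0)..2 * Real.pi, ‖γ (circleMap 0 R θ)‖)
            ≤ ∫ _ : ℝ in (0)..2 * Real.pi, B * (1+R)^d := by
              apply intervalIntegral.integral_mono_on Real.two_pi_pos.le
              · exact ((hγ.continuous.comp (continuous_circleMap 0 R)).norm).intervalIntegrable 0 _
              · exact intervalIntegrable_const
              · exact hmono
          _ = 2 * Real.pi * (B * (1+R)^d) := by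
              rw [intervalIntegral.integral_const, smul_eq_mul]
              ring
      have h2 : ‖p n‖ ≤ B * (1+R)^d / R^n := by
        calc ‖p n‖ ≤ ((2 * Real.pi)⁻¹ * ∫ θ : ℝ in (0)..2 * Real.pi,
              ‖γ (circleMap 0 R θ)‖) * |R|⁻¹ ^ n := hest
          _ ≤ ((2 * Real.pi)⁻¹ * (2 * Real.pi * (B * (1+R)^d))) * |R|⁻¹ ^ n := by
              apply mul_le_mul_of_nonneg_right
              · exact mul_le_mul_of_nonneg_left hint (by positivity)
              · positivity
          _ = B * (1+R)^d / R^n := by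
              rw [abs_of_pos hR0]
              field_simp
              rw [one_div, inv_pow, inv_mul_cancel_right₀ (by positivity)]
      refine h2.trans ?_
      have h1R : (1+R)^d ≤ 2^d * R^d := by
        calc (1+R)^d ≤ (2*R)^d := by
              apply pow_le_pow_left₀ (by linarith) (by linarith)
          _ = 2^d * R^d := mul_pow 2 R d
      have hpow : R^d * R ≤ R^n := by
        calc R^d * R = R^(d+1) := (pow_succ R d).symm
          _ ≤ R^n := pow_le_pow_right₀ hR hn
      rw [div_le_div_iff₀ (by positivity) hR0]
      calc B * (1+R)^d * R ≤ B * (2^d * R^d) * R := by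
            exact mul_le_mul_of_nonneg_right (mul_le_mul_of_nonneg_left h1R hB) hR0.le
        _ = B * 2^d * (R^d * R) := by ring
        _ ≤ B * 2^d * R^n := mul_le_mul_of_nonneg_left hpow (by positivity)
    have htend : Tendsto (fun R : ℝ => B * 2^d / R) atTop (𝓝 0) :=
      Tendsto.div_atTop tendsto_const_nhds tendsto_id
    have hle : ‖p n‖ ≤ 0 :=
      ge_of_tendsto htend (eventually_atTop.mpr ⟨1, key⟩)
    exact norm_le_zero_iff.mp hle
  -- representation as a polynomial
  have hsum : ∀ z : ℂ, HasSum (fun n : ℕ => p.coeff n * z^n) (γ z) := by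
    intro z
    have hmem : z ∈ EMetric.ball (0:ℂ) ⊤ := EMetric.mem_ball.mpr (edist_lt_top z 0)
    have hs := hp1.hasSum hmem
    rw [zero_add] at hs
    have heq : (fun n : ℕ => p n fun _ => z) = fun n : ℕ => p.coeff n * z^n := by
      funext n
      rw [p.apply_eq_pow_smul_coeff, smul_eq_mul]
      ring
    exact heq ▸ hs
  have hrep : ∀ z : ℂ, γ z = ∑ n ∈ Finset.range (d+1), p.coeff n * z^n := by
    intro z
    refine (hsum z).unique (hasSum_sum_of_ne_finset_zero ?_)
    intro n hn
    have hdn : d < n := by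
      by_contra hcon
      exact hn (Finset.mem_range.mpr (Nat.lt_succ_of_le (not_lt.mp hcon)))
    have : p n = 0 := hzero n hdn
    simp [FormalMultilinearSeries.coeff, this]
  refine ⟨∑ n ∈ Finset.range (d+1), Polynomial.C (p.coeff n) * Polynomial.X^n, ?_, ?_⟩
  · apply Polynomial.natDegree_sum_le_of_forall_le
    intro n hn
    calc (Polynomial.C (p.coeff n) * Polynomial.X^n).natDegree
        ≤ (Polynomial.C (p.coeff n)).natDegree + (Polynomial.X^n : Polynomial ℂ).natDegree :=
          Polynomial.natDegree_mul_le
      _ ≤ d := by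
          simp [Polynomial.natDegree_C, Polynomial.natDegree_X_pow]
          exact Nat.lt_succ_iff.mp (Finset.mem_range.mp hn)
  · intro z
    rw [hrep z]
    simp [Polynomial.eval_finset_sum]

/-- A nowhere vanishing entire function of finite order of growth is the
exponential of a polynomial of degree at most the order. -/
theorem nonvanishing_entire_finite_order_is_exp_poly
    (h : ℂ → ℂ) (hdiff : Differentiable ℂ h) (hnz : ∀ z : ℂ, h z ≠ 0)
    (C : ℝ) (hC : 0 < C) (d : ℕ)
    (hgrowth : ∀ z : ℂ, ‖h z‖ ≤ Real.exp (C * (1 + ‖z‖) ^ d)) :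
    ∃ P : Polynomial ℂ, P.natDegree ≤ d ∧ ∀ z : ℂ, h z = Complex.exp (P.eval z) := by
  obtain ⟨γ, hγdiff, hγrep⟩ := entire_exp_rep hdiff hnz
  have hre : ∀ z : ℂ, (γ z).re ≤ C * (1 + ‖z‖)^d := by
    intro z
    have h1 : Real.exp ((γ z).re) = ‖h z‖ := by
      rw [hγrep z, Complex.norm_exp]
    rw [← Real.exp_le_exp, h1]
    exact hgrowth z
  set B : ℝ := 2*C*3^d + 3*‖γ 0‖ + 2 with hB
  have hbound : ∀ z : ℂ, ‖γ z‖ ≤ B * (1 + ‖z‖)^d := by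
    intro z
    set R : ℝ := ‖z‖ + 1 with hR
    have hR0 : 0 < R := by positivity
    set A : ℝ := C*(1+2*R)^d + ‖γ 0‖ + 1 with hA
    have hA0 : 0 < A := by positivity
    have hre2 : ∀ w : ℂ, ‖w‖ < 2*R → ((γ w - γ 0)).re < A := by
      intro w hw
      rw [Complex.sub_re]
      have h2 : -(‖γ 0‖) ≤ (γ 0).re := by
        have := abs_le.mp (Complex.abs_re_le_norm (γ 0))
        exact this.1
      have h3 : C*(1+‖w‖)^d ≤ C*(1+2*R)^d := by
        apply mul_le_mul_of_nonneg_left _ hC.le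
        apply pow_le_pow_left₀ (by positivity) (by linarith)
      have := hre w
      simp only [hA]
      linarith
    have hbc := borel_caratheodory ((hγdiff.sub_const (γ 0)).comp differentiable_id)
      (by simp) hR0 hA0 (fun w hw => hre2 w hw) z (by simp only [hR]; linarith)
    have habs : ‖γ z‖ ≤ ‖γ 0‖ + 2*A := by
      calc ‖γ z‖ = ‖(γ z - γ 0) + γ 0‖ := by ring_nf
        _ ≤ ‖γ z - γ 0‖ + ‖γ 0‖ := norm_add_le _ _
        _ ≤ 2*A + ‖γ 0‖ := by
            have : ‖(fun w => γ w - γ 0) z‖ ≤ 2*A := hbc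
            simp only at this
            linarith
        _ = ‖γ 0‖ + 2*A := by ring
    have hpow1 : (1:ℝ) ≤ (1+‖z‖)^d :=
      one_le_pow₀ (by linarith [norm_nonneg z])
    have h3R : C*(1+2*R)^d ≤ C*3^d*(1+‖z‖)^d := by
      calc C*(1+2*R)^d ≤ C*(3*(1+‖z‖))^d := by
            apply mul_le_mul_of_nonneg_left _ hC.le
            apply pow_le_pow_left₀ (by positivity)
            simp only [hR]; linarith [norm_nonneg z]
        _ = C*3^d*(1+‖z‖)^d := by rw [mul_pow]; ring
    calc ‖γ z‖ ≤ ‖γ 0‖ + 2*A := habs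
      _ = 2*(C*(1+2*R)^d) + 3*‖γ 0‖ + 2 := by rw [hA]; ring
      _ ≤ 2*(C*3^d*(1+‖z‖)^d) + (3*‖γ 0‖ + 2)*(1+‖z‖)^d := by
          have h4 : 3*‖γ 0‖ + 2 ≤ (3*‖γ 0‖ + 2)*(1+‖z‖)^d := by
            nlinarith [norm_nonneg (γ 0)]
          linarith
      _ = B * (1 + ‖z‖)^d := by rw [hB]; ring
  obtain ⟨P, hdeg, heval⟩ := entire_poly_growth hγdiff d hbound
  exact ⟨P, hdeg, fun z => by rw [hγrep z, heval z]⟩
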